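/- Under the hypotheses of the infinite-composition lemma, if F and F' are two finite subsets of Λ both containing Supp(s), then P_F(s) = P_{F'}(s); in particular, if Supp(s) is empty then P_F(s) = s for every finite F. -/

import Mathlib

/-- Apply the maps `P a` for `a` in the list, in list order (head first). -/
def applySorted {S Λ : Type*} (P : Λ → S → S) : List Λ → S → S
  | [], s => s
  | a :: l, s => applySorted P l (P a s)

/-- The support of `s`: the indices `lam` such that `P lam` does not fix `s`. -/
def Supp {S Λ : Type*} (P : Λ → S → S) (s : S) : Set Λ := {lam | P lam s ≠ s}

lemma applySorted_of_empty {S Λ : Type*} (P : Λ → S → S) (s : S)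
    (h : Supp P s = ∅) : ∀ l : List Λ, applySorted P l s = s := by
  intro l
  induction l with
  | nil => rfl
  | cons a t ih =>
      have ha : P a s = s := by
        by_contra hc
        have : a ∈ Supp P s := hc
        simp [h] at this
      simp [applySorted, ha, ih]

lemma applySorted_step {S Λ : Type*} [LinearOrder Λ] (P : Λ → S → S) (s : S) (lam : Λ)
    (hl : IsLeast (Supp P s) lam) :
    ∀ l : List Λ, l.Pairwise (· < ·) → Supp P s ⊆ {x | x ∈ l} →
      applySorted P l s = applySorted P (l.filter (fun x => lam < x)) (P lam s) := by
  intro l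
  induction l with
  | nil => intro _ hsub; exact absurd (hsub hl.1) (by simp)
  | cons a t ih =>
      intro hsort hsub
      rcases eq_or_ne a lam with rfl | hne
      · have hfil : t.filter (fun x => a < x) = t := by
          refine List.filter_eq_self.2 ?_
          intro x hx
          simpa using (List.pairwise_cons.1 hsort).1 x hx
        simp [applySorted, List.filter_cons, hfil]
      · have hmem : lam ∈ t := by
          have := hsub hl.1
          simp at this
          tauto
        have halt : a < lam := (List.pairwise_cons.1 hsort).1 lam hmem
        have ha : P a s = s := by
          by_contra hc
          exact absurd (hl.2 hc) (not_le.2 halt)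
        have hsub' : Supp P s ⊆ {x | x ∈ t} := by
          intro x hx
          have := hsub hx
          simp at this ⊢
          rcases this with rfl | h
          · exact absurd ha hx
          · exact h
        have : ¬ lam < a := not_lt.2 halt.le
        simp [applySorted, ha, List.filter_cons, this,
          ih (List.pairwise_cons.1 hsort).2 hsub']

lemma applySorted_indep {S Λ : Type*} [LinearOrder Λ] (P : Λ → S → S)
    (hfin : ∀ s, (Supp P s).Finite)
    (hleast : ∀ s lam, IsLeast (Supp P s) lam → Supp P (P lam s) ⊆ Supp P s \ {lam}) :
    ∀ n : ℕ, ∀ s : S, (hfin s).toFinset.card ≤ n →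
      ∀ l l' : List Λ, l.Pairwise (· < ·) → l'.Pairwise (· < ·) →
        Supp P s ⊆ {x | x ∈ l} → Supp P s ⊆ {x | x ∈ l'} →
        applySorted P l s = applySorted P l' s := by
  intro n
  induction n with
  | zero =>
      intro s hcard l l' _ _ _ _
      have he : Supp P s = ∅ := by
        have := Finset.card_eq_zero.1 (Nat.le_zero.1 hcard)
        simpa [Set.Finite.toFinset_eq_empty] using this
      rw [applySorted_of_empty P s he, applySorted_of_empty P s he]
  | succ n ih =>
      intro s hcard l l' hs hs' hsub hsub'
      rcases Set.eq_empty_or_nonempty (Supp P s) with he | hne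
      · rw [applySorted_of_empty P s he, applySorted_of_empty P s he]
      · have hne' : (hfin s).toFinset.Nonempty := by
          simpa [Set.Finite.toFinset_nonempty] using hne
        set lam := (hfin s).toFinset.min' hne' with hlamdef
        have hlam : IsLeast (Supp P s) lam := by
          constructor
          · simpa using (hfin s).toFinset.min'_mem hne'
          · intro x hx
            exact (hfin s).toFinset.min'_le x (by simpa using hx)
        rw [applySorted_step P s lam hlam l hs hsub,
          applySorted_step P s lam hlam l' hs' hsub']
        have hsubS : Supp P (P lam s) ⊆ Supp P s \ {lam} := hleast s lam hlam
        have hcard' : (hfin (P lam s)).toFinset.card ≤ n := by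
          have h1 : (hfin (P lam s)).toFinset ⊆ (hfin s).toFinset.erase lam := by
            intro x hx
            have hx' := hsubS (by simpa using hx)
            simp only [Finset.mem_erase, Set.Finite.mem_toFinset]
            exact ⟨hx'.2, hx'.1⟩
          have h2 := Finset.card_le_card h1
          have h3 : ((hfin s).toFinset.erase lam).card = (hfin s).toFinset.card - 1 :=
            Finset.card_erase_of_mem (by simpa using hlam.1)
          omega
        have key : ∀ x, x ∈ Supp P (P lam s) → lam < x := by
          intro x hx
          have hx' := hsubS hx
          exact lt_of_le_of_ne (hlam.2 hx'.1) (Ne.symm hx'.2)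
        refine ih (P lam s) hcard' _ _ (hs.filter _) (hs'.filter _) ?_ ?_
        · intro x hx
          have := hsub (hsubS hx).1
          simp only [Set.mem_setOf_eq, List.mem_filter, decide_eq_true_eq] at this ⊢
          exact ⟨this, key x hx⟩
        · intro x hx
          have := hsub' (hsubS hx).1
          simp only [Set.mem_setOf_eq, List.mem_filter, decide_eq_true_eq] at this ⊢
          exact ⟨this, key x hx⟩

theorem stmt3 {S Λ : Type*} [LinearOrder Λ] (P : Λ → S → S)
    (hfin : ∀ s, (Supp P s).Finite)
    (hleast : ∀ s lam, IsLeast (Supp P s) lam → Supp P (P lam s) ⊆ Supp P s \ {lam})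
    (s : S) :
    (∀ F F' : Finset Λ, Supp P s ⊆ ↑F → Supp P s ⊆ ↑F' →
      applySorted P (F.sort (· ≤ ·)) s = applySorted P (F'.sort (· ≤ ·)) s) ∧
    (Supp P s = ∅ → ∀ F : Finset Λ, applySorted P (F.sort (· ≤ ·)) s = s) := by
  constructor
  · intro F F' hF hF'
    exact applySorted_indep P hfin hleast (hfin s).toFinset.card s le_rfl _ _
      (List.sortedLT_iff_pairwise.1 (Finset.sortedLT_sort F)) (List.sortedLT_iff_pairwise.1 (Finset.sortedLT_sort F'))
      (fun x hx => by simpa using hF hx) (fun x hx => by simpa using hF' hx)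
  · intro h F
    exact applySorted_of_empty P s h _
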